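/- Let H1, H2 be finitely generated subgroups of G = F × A and set K := H1π ∩ H2π ≤ F. Then the derived (commutator) subgroup [K,K] is contained in (H1 ∩ H2)π; consequently (H1 ∩ H2)π is a normal subgroup of K and the quotient K/(H1 ∩ H2)π is abelian. -/

import Mathlib

open scoped commutatorElement

/-- For finitely generated subgroups `H1, H2 ≤ F × A` and
`K = H1π ∩ H2π`, the commutator subgroup `[K,K]` is contained in `(H1 ∩ H2)π`;
consequently `(H1 ∩ H2)π` is normal in `K` and the quotient `K/(H1 ∩ H2)π` is
abelian. -/
theorem commutator_le_proj_inter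
    (F A : Type) [Group F] [IsFreeGroup F] [CommGroup A] [Group.FG A]
    (H1 H2 : Subgroup (F × A)) (hH1 : H1.FG) (hH2 : H2.FG) :
    ⁅H1.map (MonoidHom.fst F A) ⊓ H2.map (MonoidHom.fst F A),
      H1.map (MonoidHom.fst F A) ⊓ H2.map (MonoidHom.fst F A)⁆ ≤
        (H1 ⊓ H2).map (MonoidHom.fst F A) ∧
    (((H1 ⊓ H2).map (MonoidHom.fst F A)).subgroupOf
      (H1.map (MonoidHom.fst F A) ⊓ H2.map (MonoidHom.fst F A))).Normal ∧
    ∀ x y : (H1.map (MonoidHom.fst F A) ⊓ H2.map (MonoidHom.fst F A) : Subgroup F),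
      (QuotientGroup.mk (x * y) :
          (H1.map (MonoidHom.fst F A) ⊓ H2.map (MonoidHom.fst F A) : Subgroup F) ⧸
            ((H1 ⊓ H2).map (MonoidHom.fst F A)).subgroupOf
              (H1.map (MonoidHom.fst F A) ⊓ H2.map (MonoidHom.fst F A))) =
        QuotientGroup.mk (y * x) := by
  set K := H1.map (MonoidHom.fst F A) ⊓ H2.map (MonoidHom.fst F A) with hK
  set M := (H1 ⊓ H2).map (MonoidHom.fst F A) with hM
  have hcomm : ∀ x ∈ K, ∀ y ∈ K, ⁅x, y⁆ ∈ M := by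
    rintro x hx y hy
    obtain ⟨⟨p, hp1, hpx⟩, ⟨p', hp2, hp'x⟩⟩ := hx
    obtain ⟨⟨q, hq1, hqy⟩, ⟨q', hq2, hq'y⟩⟩ := hy
    have key : ∀ (a b : F × A), a.1 = x → b.1 = y → ⁅a, b⁆ = (⁅x, y⁆, 1) := by
      intro a b ha hb
      ext
      · simp [commutatorElement_def, ha, hb]
      · simp only [commutatorElement_def, Prod.snd_mul, Prod.snd_inv]
        rw [mul_comm a.2 b.2]
        group
    have h1 : ((⁅x, y⁆, (1 : A)) : F × A) ∈ H1 := by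
      rw [← key p q hpx hqy]
      exact mul_mem (mul_mem (mul_mem hp1 hq1) (inv_mem hp1)) (inv_mem hq1)
    have h2 : ((⁅x, y⁆, (1 : A)) : F × A) ∈ H2 := by
      rw [← key p' q' hp'x hq'y]
      exact mul_mem (mul_mem (mul_mem hp2 hq2) (inv_mem hp2)) (inv_mem hq2)
    exact ⟨(⁅x, y⁆, 1), ⟨h1, h2⟩, rfl⟩
  refine ⟨Subgroup.commutator_le.mpr hcomm, ?_, ?_⟩
  · constructor
    intro n hn g
    rw [Subgroup.mem_subgroupOf] at hn ⊢
    have : ((g * n * g⁻¹ : K) : F) = ⁅(g : F), (n : F)⁆ * (n : F) := by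
      push_cast
      group
    rw [this]
    exact mul_mem (hcomm _ g.2 _ n.2) hn
  · intro x y
    rw [QuotientGroup.eq, Subgroup.mem_subgroupOf]
    have : (((x * y)⁻¹ * (y * x) : K) : F) = ⁅(y : F)⁻¹, (x : F)⁻¹⁆ := by
      push_cast
      group
    rw [this]
    exact hcomm _ (inv_mem y.2) _ (inv_mem x.2)
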